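/- Every average-price game on a finite graph is determined and both players have optimal positional strategies: for every vertex v, the infimum over positional strategies μ of Min of the supremum over all strategies χ of Max of A_Min(v,μ,χ) equals the supremum over positional strategies χ of Max of the infimum over all strategies μ of Min of A_Max(v,μ,χ), and this common quantity equals both the upper value inf_μ sup_χ A_Min(v,μ,χ) and the lower value sup_χ inf_μ A_Max(v,μ,χ). -/

import Mathlib

noncomputable section

attribute [local instance] Classical.propDecidable

/-- A two-player (Min/Max) game arena with real-valued step costs. -/
structure Arena (Conf Move : Type) where
  Tr : Conf → Move → Conf → Prop
  cost : Conf → Move → ℝ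
  IsMin : Conf → Prop

namespace Arena

variable {Conf Move : Type}

/-- A finite run in the arena. -/
structure FinRun (G : Arena Conf Move) where
  n : ℕ
  q : Fin (n + 1) → Conf
  m : Fin n → Move
  valid : ∀ i : Fin n, G.Tr (q i.castSucc) (m i) (q i.succ)

/-- The last configuration of a finite run. -/
def FinRun.last {G : Arena Conf Move} (r : G.FinRun) : Conf := r.q (Fin.last r.n)

/-- The first configuration of a finite run. -/
def FinRun.first {G : Arena Conf Move} (r : G.FinRun) : Conf := r.q 0

/-- The trivial run consisting of a single configuration. -/
def single (G : Arena Conf Move) (q0 : Conf) : G.FinRun :=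
  ⟨0, fun _ => q0, Fin.elim0, fun i => i.elim0⟩

/-- Extending a finite run by one transition. -/
def FinRun.extend {G : Arena Conf Move} (r : G.FinRun) (mv : Move) (q' : Conf)
    (h : G.Tr r.last mv q') : G.FinRun where
  n := r.n + 1
  q := Fin.snoc r.q q'
  m := Fin.snoc r.m mv
  valid := by
    intro i
    induction i using Fin.lastCases with
    | last =>
        have h1 : (Fin.snoc r.q q' : Fin (r.n + 1 + 1) → Conf) (Fin.last r.n).castSucc = r.last := by
          rw [Fin.snoc_castSucc]; rfl
        have h2 : (Fin.snoc r.q q' : Fin (r.n + 1 + 1) → Conf) (Fin.last r.n).succ = q' := by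
          rw [Fin.succ_last, Fin.snoc_last]
        have h3 : (Fin.snoc r.m mv : Fin (r.n + 1) → Move) (Fin.last r.n) = mv := Fin.snoc_last _ _
        rw [h1, h2, h3]; exact h
    | cast j =>
        have h1 : (Fin.snoc r.q q' : Fin (r.n + 1 + 1) → Conf) j.castSucc.castSucc = r.q j.castSucc :=
          Fin.snoc_castSucc _ _ _
        have h2 : (Fin.snoc r.q q' : Fin (r.n + 1 + 1) → Conf) j.castSucc.succ = r.q j.succ := by
          rw [Fin.succ_castSucc, Fin.snoc_castSucc]
        have h3 : (Fin.snoc r.m mv : Fin (r.n + 1) → Move) j.castSucc = r.m j := Fin.snoc_castSucc _ _ _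
        rw [h1, h2, h3]; exact r.valid j

/-- Strategies of player Min: mappings from finite runs to moves that are
available whenever the last configuration belongs to Min. -/
def MinStrategy (G : Arena Conf Move) : Type :=
  {σ : G.FinRun → Move // ∀ r : G.FinRun, G.IsMin r.last → ∃ q', G.Tr r.last (σ r) q'}

/-- Strategies of player Max. -/
def MaxStrategy (G : Arena Conf Move) : Type :=
  {σ : G.FinRun → Move // ∀ r : G.FinRun, ¬ G.IsMin r.last → ∃ q', G.Tr r.last (σ r) q'}

/-- A strategy is positional if its choice depends only on the last configuration. -/
def Positional {G : Arena Conf Move} (σ : G.FinRun → Move) : Prop :=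
  ∀ r r' : G.FinRun, r.last = r'.last → σ r = σ r'

/-- The finite prefixes of the unique play from `q0` in which Min uses `μ`
and Max uses `χ`. -/
def play (G : Arena Conf Move) (μ : G.MinStrategy) (χ : G.MaxStrategy) (q0 : Conf) :
    ℕ → G.FinRun
  | 0 => G.single q0
  | n + 1 =>
    let r := G.play μ χ q0 n
    if h : G.IsMin r.last then
      r.extend (μ.1 r) (Classical.choose (μ.2 r h)) (Classical.choose_spec (μ.2 r h))
    else
      r.extend (χ.1 r) (Classical.choose (χ.2 r h)) (Classical.choose_spec (χ.2 r h))

/-- Total cost (e.g. total time) of a finite run. -/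
def FinRun.time {G : Arena Conf Move} (r : G.FinRun) : ℝ :=
  ∑ i : Fin r.n, G.cost (r.q i.castSucc) (r.m i)

/-- Payoff of player Min (to be minimised): limsup of average cost. -/
def AMin (G : Arena Conf Move) (q0 : Conf) (μ : G.MinStrategy) (χ : G.MaxStrategy) : ℝ :=
  Filter.limsup (fun n : ℕ => (G.play μ χ q0 n).time / n) Filter.atTop

/-- Payoff of player Max (to be maximised): liminf of average cost. -/
def AMax (G : Arena Conf Move) (q0 : Conf) (μ : G.MinStrategy) (χ : G.MaxStrategy) : ℝ :=
  Filter.liminf (fun n : ℕ => (G.play μ χ q0 n).time / n) Filter.atTop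

/-- Upper value of the game at `q0`. -/
def upperVal (G : Arena Conf Move) (q0 : Conf) : ℝ :=
  ⨅ μ : G.MinStrategy, ⨆ χ : G.MaxStrategy, G.AMin q0 μ χ

/-- Lower value of the game at `q0`. -/
def lowerVal (G : Arena Conf Move) (q0 : Conf) : ℝ :=
  ⨆ χ : G.MaxStrategy, ⨅ μ : G.MinStrategy, G.AMax q0 μ χ

/-- The value of the game at `q0` (meaningful when the game is determined). -/
def val (G : Arena Conf Move) (q0 : Conf) : ℝ := G.upperVal q0

end Arena

/-- The arena of an average-price game on a finite directed graph `(V, E)`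
with price function `price` and vertex partition given by `VMin`. -/
def priceArena (V : Type) (E : V → V → Prop) (price : V → V → ℤ) (VMin : Set V) :
    Arena V V where
  Tr := fun u w u' => E u w ∧ u' = w
  cost := fun u w => (price u w : ℝ)
  IsMin := fun u => u ∈ VMin

open Filter Topology

section MPGAux

variable {V : Type}

lemma avg_abs_le (cst : ℕ → ℝ) (M : ℝ) (hM : ∀ n, |cst n| ≤ M) (n : ℕ) :
    |(∑ i ∈ Finset.range n, cst i) / n| ≤ M := by
  have hM0 : 0 ≤ M := le_trans (abs_nonneg _) (hM 0)
  rcases Nat.eq_zero_or_pos n with hn | hn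
  · subst hn; simpa using hM0
  · rw [abs_div, Nat.abs_cast, div_le_iff₀ (by exact_mod_cast hn)]
    calc |∑ i ∈ Finset.range n, cst i| ≤ ∑ i ∈ Finset.range n, |cst i| :=
          Finset.abs_sum_le_sum_abs _ _
      _ ≤ ∑ _i ∈ Finset.range n, M := Finset.sum_le_sum (fun i _ => hM i)
      _ = n * M := by rw [Finset.sum_const, Finset.card_range, nsmul_eq_mul]
      _ = M * n := by ring

/-- Abstract telescoping lemma: if a potential pair `(ν, d)` controls the step
costs along a sequence, the limsup of averages is at most `ν (Q 0)`. -/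
lemma limsup_avg_le_of_potential [Fintype V] (ν d : V → ℝ)
    (Q : ℕ → V) (cst : ℕ → ℝ) (M : ℝ)
    (hM : ∀ n, |cst n| ≤ M)
    (hstep : ∀ n, ν (Q (n + 1)) ≤ ν (Q n))
    (hcost : ∀ n, ν (Q (n + 1)) = ν (Q n) →
      cst n ≤ ν (Q n) + d (Q n) - d (Q (n + 1))) :
    Filter.limsup (fun n : ℕ => (∑ i ∈ Finset.range n, cst i) / n) Filter.atTop ≤ ν (Q 0) := by
  have hM0 : 0 ≤ M := le_trans (abs_nonneg _) (hM 0)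
  -- the potential ν is non-increasing along Q and takes finitely many values
  have hmono : Antitone (fun n => ν (Q n)) := antitone_nat_of_succ_le hstep
  obtain ⟨m, ⟨N0, hN0⟩, hmmin⟩ :=
    Set.exists_min_image (Set.range fun n => ν (Q n)) id
      ((Set.finite_range ν).subset (by rintro _ ⟨n, rfl⟩; exact ⟨Q n, rfl⟩)) ⟨_, ⟨0, rfl⟩⟩
  have hconst : ∀ n, N0 ≤ n → ν (Q n) = m := by
    intro n hn
    exact le_antisymm (hN0 ▸ hmono hn) (hmmin _ ⟨n, rfl⟩)
  have hm0 : m ≤ ν (Q 0) := hmmin _ ⟨0, rfl⟩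
  -- telescoping bound after stabilisation
  have tele : ∀ n, N0 ≤ n → ∑ i ∈ Finset.range n, cst i ≤
      (∑ i ∈ Finset.range N0, cst i) + ((n : ℝ) - N0) * m + (d (Q N0) - d (Q n)) := by
    intro n hn
    induction n, hn using Nat.le_induction with
    | base => simp
    | succ n hn ih =>
        rw [Finset.sum_range_succ]
        have he1 : ν (Q (n + 1)) = m := hconst _ (le_trans hn (Nat.le_succ n))
        have he2 : ν (Q n) = m := hconst _ hn
        have hc := hcost n (by rw [he1, he2])
        rw [he2] at hc
        push_cast
        linarith
  obtain ⟨D, hD⟩ := Finite.exists_le (fun u : V => |d u|)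
  set C : ℝ := |∑ i ∈ Finset.range N0, cst i| + D + D + N0 * |m| with hC
  have hCpos : 0 ≤ C := by
    have := abs_nonneg (∑ i ∈ Finset.range N0, cst i)
    have h1 := le_trans (abs_nonneg (d (Q 0))) (hD (Q 0))
    have h2 := abs_nonneg m
    positivity
  have hev : ∀ n, N0 + 1 ≤ n → (∑ i ∈ Finset.range n, cst i) / n ≤ m + C / n := by
    intro n hn
    have hnpos : (0 : ℝ) < n := by exact_mod_cast Nat.lt_of_lt_of_le (Nat.succ_pos N0) hn
    rw [div_le_iff₀ hnpos, add_mul, div_mul_cancel₀ _ (ne_of_gt hnpos)]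
    have ht := tele n (le_trans (Nat.le_succ N0) hn)
    have h1 : ((n : ℝ) - N0) * m ≤ n * m + N0 * |m| := by
      have h2 : -((N0 : ℝ) * m) ≤ N0 * |m| := by
        rw [neg_mul_eq_mul_neg]
        exact mul_le_mul_of_nonneg_left (neg_le_abs m) (Nat.cast_nonneg N0)
      linarith
    have h3 : ∑ i ∈ Finset.range N0, cst i ≤ |∑ i ∈ Finset.range N0, cst i| := le_abs_self _
    have h4 : d (Q N0) ≤ D := le_trans (le_abs_self _) (hD _)
    have h5 : -D ≤ d (Q n) := by
      have := hD (Q n)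
      have := neg_abs_le (d (Q n))
      linarith
    have : (m : ℝ) * n = n * m := by ring
    linarith
  -- pass to the limsup
  have habs : ∀ n : ℕ, |(∑ i ∈ Finset.range n, cst i) / n| ≤ M := by
    intro n
    rcases Nat.eq_zero_or_pos n with hn | hn
    · subst hn; simpa using hM0
    · rw [abs_div, Nat.abs_cast, div_le_iff₀ (by exact_mod_cast hn)]
      calc |∑ i ∈ Finset.range n, cst i| ≤ ∑ i ∈ Finset.range n, |cst i| :=
            Finset.abs_sum_le_sum_abs _ _
        _ ≤ ∑ _i ∈ Finset.range n, M := Finset.sum_le_sum (fun i _ => hM i)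
        _ = n * M := by rw [Finset.sum_const, Finset.card_range, nsmul_eq_mul]
        _ = M * n := by ring
  have hcob : Filter.IsCoboundedUnder (· ≤ ·)  Filter.atTop
      (fun n : ℕ => (∑ i ∈ Finset.range n, cst i) / n) :=
    (Filter.isBoundedUnder_of
      (⟨-M, fun n => (abs_le.1 (habs n)).1⟩ :
        ∃ b : ℝ, ∀ n : ℕ, (∑ i ∈ Finset.range n, cst i) / n ≥ b)).isCoboundedUnder_le
  have hlim2 : Filter.Tendsto (fun n : ℕ => m + C / n) Filter.atTop (𝓝 m) := by
    have := (tendsto_const_div_atTop_nhds_zero_nat C).const_add m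
    simpa using this
  have := Filter.limsup_le_limsup
    (Filter.eventually_atTop.2 ⟨N0 + 1, hev⟩) hcob
    (Filter.isBoundedUnder_of (⟨m + C, fun n : ℕ => by
      show m + C / n ≤ m + C
      rcases Nat.eq_zero_or_pos n with hn | hn
      · subst hn; simpa using hCpos
      · have h1 : C / (n : ℝ) ≤ C := div_le_self hCpos (by exact_mod_cast hn)
        linarith⟩ : ∃ b : ℝ, ∀ n : ℕ, m + C / n ≤ b))
  rw [hlim2.limsup_eq] at this
  exact le_trans this hm0

lemma le_liminf_avg_of_potential [Fintype V] (ν d : V → ℝ)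
    (Q : ℕ → V) (cst : ℕ → ℝ) (M : ℝ)
    (hM : ∀ n, |cst n| ≤ M)
    (hstep : ∀ n, ν (Q n) ≤ ν (Q (n + 1)))
    (hcost : ∀ n, ν (Q (n + 1)) = ν (Q n) →
      ν (Q n) + d (Q n) - d (Q (n + 1)) ≤ cst n) :
    ν (Q 0) ≤ Filter.liminf (fun n : ℕ => (∑ i ∈ Finset.range n, cst i) / n) Filter.atTop := by
  have key := limsup_avg_le_of_potential (fun u => -ν u) (fun u => -d u) Q (fun n => -cst n) M
    (fun n => by rw [abs_neg]; exact hM n)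
    (fun n => neg_le_neg (hstep n))
    (fun n hne => by
      have h2 : ν (Q (n + 1)) = ν (Q n) := neg_injective hne
      have := hcost n h2
      show -cst n ≤ -ν (Q n) + -d (Q n) - -d (Q (n + 1))
      linarith)
  have hrw : (fun n : ℕ => (∑ i ∈ Finset.range n, -cst i) / (n : ℝ)) =
      fun n : ℕ => -((∑ i ∈ Finset.range n, cst i) / n) := by
    funext n
    rw [Finset.sum_neg_distrib, neg_div]
  rw [hrw] at key
  have key' : Filter.limsup (fun n : ℕ => -((∑ i ∈ Finset.range n, cst i) / n))
      Filter.atTop ≤ -ν (Q 0) := key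
  have habs := avg_abs_le cst M hM
  have hbneg : Filter.IsBoundedUnder (· ≤ ·) Filter.atTop
      (fun n : ℕ => -((∑ i ∈ Finset.range n, cst i) / n)) :=
    Filter.isBoundedUnder_of (⟨M, fun n : ℕ => by
      have := (abs_le.1 (habs n)).1; linarith⟩ :
        ∃ b : ℝ, ∀ n : ℕ, -((∑ i ∈ Finset.range n, cst i) / n) ≤ b)
  have hcob : Filter.IsCoboundedUnder (· ≥ ·) Filter.atTop
      (fun n : ℕ => (∑ i ∈ Finset.range n, cst i) / n) :=
    (Filter.isBoundedUnder_of (⟨M, fun n => (abs_le.1 (habs n)).2⟩ :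
      ∃ b : ℝ, ∀ n : ℕ, (∑ i ∈ Finset.range n, cst i) / n ≤ b)).isCoboundedUnder_ge
  have hmain : ∀ ε : ℝ, 0 < ε →
      ν (Q 0) ≤ Filter.liminf (fun n : ℕ => (∑ i ∈ Finset.range n, cst i) / n)
        Filter.atTop + ε := by
    intro ε hε
    have hlt : Filter.limsup (fun n : ℕ => -((∑ i ∈ Finset.range n, cst i) / n))
        Filter.atTop < -ν (Q 0) + ε := lt_of_le_of_lt key' (by linarith)
    have hev := Filter.eventually_lt_of_limsup_lt hlt hbneg
    have := Filter.le_liminf_of_le hcob (hev.mono (fun n h => by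
      show ν (Q 0) - ε ≤ (∑ i ∈ Finset.range n, cst i) / n
      have h' : -((∑ i ∈ Finset.range n, cst i) / n) < -ν (Q 0) + ε := h
      linarith))
    linarith
  exact le_of_forall_pos_le_add hmain

/-- Convergence of the normalized discounted values along a sequence of
discount factors, given the one-step recurrence along a positional map `g`. -/
lemma exists_nu_d_of_recurrence [Fintype V] (g : V → V) (c : V → V → ℝ)
    (s : ℕ → ℝ) (F : ℕ → V → ℝ)
    (hs0 : ∀ j, 0 ≤ s j) (hs1 : ∀ j, s j < 1)
    (hst : Filter.Tendsto s Filter.atTop (𝓝 1))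
    (hrec : ∀ j u, F j u = c u (g u) + s j * F j (g u)) (u : V) :
    ∃ νu du : ℝ, Filter.Tendsto (fun j => (1 - s j) * F j u) Filter.atTop (𝓝 νu) ∧
      Filter.Tendsto (fun j => F j u - νu / (1 - s j)) Filter.atTop (𝓝 du) := by
  set e : ℕ → ℝ := fun i => c (g^[i] u) (g^[i + 1] u) with he
  -- the iterated unfolding of the recurrence
  have hiter : ∀ j k n, F j (g^[k] u) =
      (∑ i ∈ Finset.range n, (s j) ^ i * e (k + i)) + (s j) ^ n * F j (g^[k + n] u) := by
    intro j k n
    induction n with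
    | zero => simp
    | succ n ih =>
        rw [Finset.sum_range_succ, ih, hrec j (g^[k + n] u)]
        have hg1 : g (g^[k + n] u) = g^[k + n + 1] u := (Function.iterate_succ_apply' g _ u).symm
        have hke : k + (n + 1) = k + n + 1 := by omega
        rw [hg1, hke]
        have hc : c (g^[k + n] u) (g^[k + n + 1] u) = e (k + n) := rfl
        rw [hc, pow_succ]
        ring
  -- the orbit of `u` under `g` is a lasso
  obtain ⟨m0, n0, hmn, heq⟩ := Finite.exists_ne_map_eq_of_infinite (fun n : ℕ => g^[n] u)
  obtain ⟨a, b, hab, horb0⟩ : ∃ a b : ℕ, a < b ∧ g^[a] u = g^[b] u := by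
    rcases lt_or_gt_of_ne hmn with h | h
    · exact ⟨m0, n0, h, heq⟩
    · exact ⟨n0, m0, h, heq.symm⟩
  set p : ℕ := b - a with hp
  have hppos : 0 < p := Nat.sub_pos_of_lt hab
  have horb : g^[a + p] u = g^[a] u := by
    rw [hp, ← Nat.add_sub_assoc (le_of_lt hab), Nat.add_sub_cancel_left]
    exact horb0.symm
  -- polynomial data
  set P : ℝ → ℝ := fun t => ∑ i ∈ Finset.range a, t ^ i * e i with hP
  set QQ : ℝ → ℝ := fun t => ∑ i ∈ Finset.range p, t ^ i * e (a + i) with hQQ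
  set S : ℝ → ℝ := fun t => ∑ i ∈ Finset.range p, t ^ i with hS
  have hSone : ∀ t : ℝ, 0 ≤ t → 1 ≤ S t := by
    intro t ht
    have h0 : (0 : ℕ) ∈ Finset.range p := Finset.mem_range.2 hppos
    have := Finset.single_le_sum (f := fun i => t ^ i) (fun i _ => pow_nonneg ht i) h0
    simpa [hS] using this
  have hgeom : ∀ t : ℝ, (1 - t) * S t = 1 - t ^ p := by
    intro t
    have := geom_sum_mul t p
    rw [hS]
    nlinarith [this]
  -- closed form for the fixed-point values
  have hcycle : ∀ j, F j (g^[a] u) = QQ (s j) / (1 - (s j) ^ p) := by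
    intro j
    have h1 := hiter j a p
    rw [horb] at h1
    have htp : (s j) ^ p < 1 := pow_lt_one₀ (hs0 j) (hs1 j) (Nat.pos_iff_ne_zero.1 hppos)
    have hne : 1 - (s j) ^ p ≠ 0 := by linarith
    field_simp
    linarith [h1]
  have hform : ∀ j, F j u = P (s j) + (s j) ^ a * (QQ (s j) / (1 - (s j) ^ p)) := by
    intro j
    have h1 := hiter j 0 a
    simp only [Function.iterate_zero_apply, Nat.zero_add, zero_add] at h1
    rw [h1, hcycle j, hP]
  -- basic nonvanishing facts
  have hS1 : S 1 ≠ 0 := by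
    have := hSone 1 zero_le_one
    linarith
  set νu : ℝ := QQ 1 / S 1 with hνu
  -- continuity of the polynomial data
  have hPc : Continuous P := by
    rw [hP]; exact continuous_finset_sum _ (fun i _ => (continuous_pow i).mul continuous_const)
  have hQQc : Continuous QQ := by
    rw [hQQ]; exact continuous_finset_sum _ (fun i _ => (continuous_pow i).mul continuous_const)
  have hSc : Continuous S := by
    rw [hS]; exact continuous_finset_sum _ (fun i _ => continuous_pow i)
  -- first limit
  have hA : ∀ j, (1 - s j) * F j u = (1 - s j) * P (s j) + (s j) ^ a * QQ (s j) / S (s j) := by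
    intro j
    have h1t : 1 - s j ≠ 0 := by have := hs1 j; intro h; linarith [(by linarith : s j = 1)]
    have hStj : S (s j) ≠ 0 := by have := hSone (s j) (hs0 j); linarith
    have hfac : 1 - (s j) ^ p = (1 - s j) * S (s j) := (hgeom (s j)).symm
    rw [hform j, hfac]
    field_simp
  have hPs : Filter.Tendsto (fun j => P (s j)) Filter.atTop (𝓝 (P 1)) :=
    hPc.continuousAt.tendsto.comp hst
  have hQs : Filter.Tendsto (fun j => QQ (s j)) Filter.atTop (𝓝 (QQ 1)) :=
    hQQc.continuousAt.tendsto.comp hst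
  have hSs : Filter.Tendsto (fun j => S (s j)) Filter.atTop (𝓝 (S 1)) :=
    hSc.continuousAt.tendsto.comp hst
  have hpows : Filter.Tendsto (fun j => (s j) ^ a) Filter.atTop (𝓝 ((1 : ℝ) ^ a)) :=
    (continuous_pow a).continuousAt.tendsto.comp hst
  have hlim1 : Filter.Tendsto (fun j => (1 - s j) * F j u) Filter.atTop (𝓝 νu) := by
    have hc1 : Filter.Tendsto (fun j => 1 - s j) Filter.atTop (𝓝 (1 - 1)) :=
      (tendsto_const_nhds : Filter.Tendsto (fun _ : ℕ => (1 : ℝ)) Filter.atTop (𝓝 1)).sub hst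
    have hcomp := (hc1.mul hPs).add ((hpows.mul hQs).div hSs hS1)
    have hval : (1 - 1) * P 1 + (1 : ℝ) ^ a * QQ 1 / S 1 = νu := by
      rw [hνu]; norm_num
    rw [hval] at hcomp
    exact hcomp.congr (fun j => (hA j).symm)
  -- second limit
  set N : ℝ → ℝ := fun t => t ^ a * QQ t - νu * S t with hN
  have hN1 : N 1 = 0 := by
    rw [hN, hνu]
    simp
    field_simp
    ring
  have hNd : DifferentiableAt ℝ N 1 := by
    rw [hN]
    apply DifferentiableAt.sub
    · exact (differentiableAt_pow a).mul (by
        rw [hQQ]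
        exact DifferentiableAt.fun_sum (fun i _ => (differentiableAt_pow i).mul_const _))
    · exact DifferentiableAt.const_mul (by
        rw [hS]
        exact DifferentiableAt.fun_sum (fun i _ => differentiableAt_pow i)) _
  set dN : ℝ := deriv N 1 with hdN
  have hslope : Filter.Tendsto (slope N 1) (nhdsWithin 1 {(1 : ℝ)}ᶜ) (𝓝 dN) :=
    hasDerivAt_iff_tendsto_slope.1 hNd.hasDerivAt
  have hst' : Filter.Tendsto s Filter.atTop (nhdsWithin 1 {(1 : ℝ)}ᶜ) := by
    refine tendsto_nhdsWithin_of_tendsto_nhds_of_eventually_within s hst ?_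
    exact Filter.Eventually.of_forall (fun j => ne_of_lt (hs1 j))
  have hB : ∀ j, F j u - νu / (1 - s j) = P (s j) - slope N 1 (s j) / S (s j) := by
    intro j
    have h1t : 1 - s j ≠ 0 := by have := hs1 j; intro h; linarith [(by linarith : s j = 1)]
    have h1t' : s j - 1 ≠ 0 := by intro h; apply h1t; linarith
    have hStj : S (s j) ≠ 0 := by have := hSone (s j) (hs0 j); linarith
    have hfac : 1 - (s j) ^ p = (1 - s j) * S (s j) := (hgeom (s j)).symm
    rw [hform j, hfac]
    rw [slope_def_field, hN1, hN]
    field_simp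
    ring
  have hlim2 : Filter.Tendsto (fun j => F j u - νu / (1 - s j)) Filter.atTop
      (𝓝 (P 1 - dN / S 1)) := by
    have h2 : Filter.Tendsto (fun j => slope N 1 (s j)) Filter.atTop (𝓝 dN) :=
      hslope.comp hst'
    have := hPs.sub (h2.div hSs hS1)
    exact this.congr (fun j => (hB j).symm)
  exact ⟨νu, P 1 - dN / S 1, hlim1, hlim2⟩

/-- Existence of a solution of the "ergodic" optimality equations for
mean-payoff games on finite graphs. -/
lemma exists_potentials [Fintype V] [Nonempty V] (E : V → V → Prop)
    (hE : ∀ v : V, ∃ w : V, E v w) (c : V → V → ℝ) (VMin : Set V) :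
    ∃ (ν d : V → ℝ) (g : V → V),
      (∀ u, E u (g u)) ∧ (∀ u, ν (g u) = ν u) ∧
      (∀ u, ν u + d u = c u (g u) + d (g u)) ∧
      (∀ u ∈ VMin, ∀ w, E u w → ν u ≤ ν w ∧ (ν w = ν u → ν u + d u ≤ c u w + d w)) ∧
      (∀ u, u ∉ VMin → ∀ w, E u w → ν w ≤ ν u ∧ (ν w = ν u → c u w + d w ≤ ν u + d u)) := by
  classical
  have hsucc : ∀ u : V, (Finset.univ.filter (fun w => E u w)).Nonempty := by
    intro u
    obtain ⟨w, hw⟩ := hE u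
    exact ⟨w, by simp [hw]⟩
  set succ : V → Finset V := fun u => Finset.univ.filter (fun w => E u w) with hsuccdef
  have hmemsucc : ∀ u w : V, w ∈ succ u ↔ E u w := by
    intro u w
    simp [hsuccdef]
  -- the one-step (Shapley) operator
  set T : ℝ → (V → ℝ) → (V → ℝ) := fun t f u =>
    if u ∈ VMin then (succ u).inf' (hsucc u) (fun w => c u w + t * f w)
    else (succ u).sup' (hsucc u) (fun w => c u w + t * f w) with hT
  -- helper: stability of inf'/sup' under uniform perturbation
  have habs_inf : ∀ (s : Finset V) (hs : s.Nonempty) (F G : V → ℝ) (r : ℝ), 0 ≤ r →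
      (∀ w ∈ s, |F w - G w| ≤ r) → |s.inf' hs F - s.inf' hs G| ≤ r := by
    intro s hs F G r hr h
    rw [abs_le]
    constructor
    · obtain ⟨w0, hw0, hF⟩ := Finset.exists_mem_eq_inf' hs F
      have h1 : s.inf' hs G ≤ G w0 := Finset.inf'_le _ hw0
      have h2 := (abs_le.1 (h w0 hw0)).1
      linarith [hF ▸ le_refl (s.inf' hs F)]
    · obtain ⟨w0, hw0, hG⟩ := Finset.exists_mem_eq_inf' hs G
      have h1 : s.inf' hs F ≤ F w0 := Finset.inf'_le _ hw0
      have h2 := (abs_le.1 (h w0 hw0)).2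
      linarith
  have habs_sup : ∀ (s : Finset V) (hs : s.Nonempty) (F G : V → ℝ) (r : ℝ), 0 ≤ r →
      (∀ w ∈ s, |F w - G w| ≤ r) → |s.sup' hs F - s.sup' hs G| ≤ r := by
    intro s hs F G r hr h
    rw [abs_le]
    constructor
    · obtain ⟨w0, hw0, hG⟩ := Finset.exists_mem_eq_sup' hs G
      have h1 : F w0 ≤ s.sup' hs F := Finset.le_sup' _ hw0
      have h2 := (abs_le.1 (h w0 hw0)).1
      linarith
    · obtain ⟨w0, hw0, hF⟩ := Finset.exists_mem_eq_sup' hs F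
      have h1 : G w0 ≤ s.sup' hs G := Finset.le_sup' _ hw0
      have h2 := (abs_le.1 (h w0 hw0)).2
      linarith
  -- existence of fixed points for every discount factor
  have hfixex : ∀ t : ℝ, 0 ≤ t → t < 1 → ∃ f : V → ℝ, T t f = f := by
    intro t ht0 ht1
    have hlip : LipschitzWith ⟨t, ht0⟩ (T t) := by
      apply LipschitzWith.of_dist_le_mul
      intro f h
      have hKnn : (0 : ℝ) ≤ t * dist f h := mul_nonneg ht0 dist_nonneg
      show dist (T t f) (T t h) ≤ t * dist f h
      rw [dist_pi_le_iff hKnn]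
      intro u
      have hco : ∀ w ∈ succ u, |(c u w + t * f w) - (c u w + t * h w)| ≤ t * dist f h := by
        intro w _
        have : (c u w + t * f w) - (c u w + t * h w) = t * (f w - h w) := by ring
        rw [this, abs_mul, abs_of_nonneg ht0]
        exact mul_le_mul_of_nonneg_left (by rw [← Real.dist_eq]; exact dist_le_pi_dist f h w) ht0
      rw [Real.dist_eq, hT]
      by_cases hu : u ∈ VMin
      · simp only [if_pos hu]
        exact habs_inf _ _ _ _ _ hKnn hco
      · simp only [if_neg hu]
        exact habs_sup _ _ _ _ _ hKnn hco
    have hcontr : ContractingWith ⟨t, ht0⟩ (T t) := ⟨by exact_mod_cast ht1, hlip⟩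
    exact ⟨ContractingWith.fixedPoint (T t) hcontr, hcontr.fixedPoint_isFixedPt⟩
  -- the sequence of discount factors
  set tj : ℕ → ℝ := fun k => 1 - 1 / (k + 1) with htj
  have htj0 : ∀ k, 0 ≤ tj k := by
    intro k
    have h1 : (1 : ℝ) / (k + 1) ≤ 1 := by
      rw [div_le_one (by positivity)]
      linarith [Nat.cast_nonneg (α := ℝ) k]
    simp only [htj]
    linarith
  have htj1 : ∀ k, tj k < 1 := by
    intro k
    have h1 : (0 : ℝ) < 1 / (k + 1) := by positivity
    simp only [htj]
    linarith
  have htjlim : Filter.Tendsto tj Filter.atTop (𝓝 1) := by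
    have h1 := tendsto_one_div_add_atTop_nhds_zero_nat (𝕜 := ℝ)
    have := (tendsto_const_nhds :
      Filter.Tendsto (fun _ : ℕ => (1 : ℝ)) Filter.atTop (𝓝 1)).sub h1
    simpa [htj] using this
  have hfx : ∀ k : ℕ, ∃ f : V → ℝ, T (tj k) f = f := fun k => hfixex _ (htj0 k) (htj1 k)
  choose fk hfk using hfx
  -- fixed-point equations coordinatewise
  have hFmin : ∀ k, ∀ u ∈ VMin, fk k u =
      (succ u).inf' (hsucc u) (fun w => c u w + tj k * fk k w) := by
    intro k u hu
    conv_lhs => rw [← hfk k]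
    simp only [hT, if_pos hu]
  have hFmax : ∀ k, ∀ u, u ∉ VMin → fk k u =
      (succ u).sup' (hsucc u) (fun w => c u w + tj k * fk k w) := by
    intro k u hu
    conv_lhs => rw [← hfk k]
    simp only [hT, if_neg hu]
  -- inequalities against arbitrary successors
  have hineqMin : ∀ k, ∀ u ∈ VMin, ∀ w, E u w → fk k u ≤ c u w + tj k * fk k w := by
    intro k u hu w hw
    rw [hFmin k u hu]
    exact Finset.inf'_le _ ((hmemsucc u w).2 hw)
  have hineqMax : ∀ k, ∀ u, u ∉ VMin → ∀ w, E u w → c u w + tj k * fk k w ≤ fk k u := by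
    intro k u hu w hw
    rw [hFmax k u hu]
    exact Finset.le_sup' (fun w' => c u w' + tj k * fk k w') ((hmemsucc u w).2 hw)
  -- optimal choices
  have hGex : ∀ k u, ∃ w, E u w ∧ fk k u = c u w + tj k * fk k w := by
    intro k u
    by_cases hu : u ∈ VMin
    · obtain ⟨w, hw, hweq⟩ := Finset.exists_mem_eq_inf' (hsucc u)
        (fun w => c u w + tj k * fk k w)
      exact ⟨w, (hmemsucc u w).1 hw, by rw [hFmin k u hu, hweq]⟩
    · obtain ⟨w, hw, hweq⟩ := Finset.exists_mem_eq_sup' (hsucc u)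
        (fun w => c u w + tj k * fk k w)
      exact ⟨w, (hmemsucc u w).1 hw, by rw [hFmax k u hu, hweq]⟩
  choose Gk hGkE hGkeq using hGex
  -- pigeonhole: a positional choice map recurring infinitely often
  obtain ⟨g, hginf⟩ := Finite.exists_infinite_fiber Gk
  have hpinf : {k : ℕ | Gk k = g}.Infinite := by
    rw [← Set.infinite_coe_iff]
    exact hginf
  set φ : ℕ → ℕ := Nat.nth (fun k => Gk k = g) with hφ
  have hφmono : StrictMono φ := Nat.nth_strictMono hpinf
  have hφmem : ∀ n, Gk (φ n) = g := fun n => Nat.nth_mem_of_infinite hpinf n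
  set s' : ℕ → ℝ := fun j => tj (φ j) with hs'
  set F' : ℕ → V → ℝ := fun j => fk (φ j) with hF'
  have hs'0 : ∀ j, 0 ≤ s' j := fun j => htj0 _
  have hs'1 : ∀ j, s' j < 1 := fun j => htj1 _
  have hs'lim : Filter.Tendsto s' Filter.atTop (𝓝 1) :=
    htjlim.comp hφmono.tendsto_atTop
  have hrec : ∀ j u, F' j u = c u (g u) + s' j * F' j (g u) := by
    intro j u
    have := hGkeq (φ j) u
    rw [hφmem j] at this
    exact this
  have hgE : ∀ u, E u (g u) := by
    intro u
    have := hGkE (φ 0) u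
    rw [hφmem 0] at this
    exact this
  -- limits
  have hlim := fun u => exists_nu_d_of_recurrence g c s' F' hs'0 hs'1 hs'lim hrec u
  choose ν d hν hd using hlim
  have h1ms : ∀ j, (1 : ℝ) - s' j ≠ 0 := by
    intro j
    have := hs'1 j
    intro hcon
    have : s' j = 1 := by linarith
    linarith [hs'1 j]
  have hsub : Filter.Tendsto (fun j => 1 - s' j) Filter.atTop (𝓝 0) := by
    have := (tendsto_const_nhds :
      Filter.Tendsto (fun _ : ℕ => (1 : ℝ)) Filter.atTop (𝓝 1)).sub hs'lim
    simpa using this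
  -- (a) ν is g-invariant
  have hνg : ∀ u, ν (g u) = ν u := by
    intro u
    have hrhs : Filter.Tendsto (fun j => (1 - s' j) * c u (g u) +
        s' j * ((1 - s' j) * F' j (g u))) Filter.atTop (𝓝 (0 * c u (g u) + 1 * ν (g u))) :=
      (hsub.mul tendsto_const_nhds).add (hs'lim.mul (hν (g u)))
    have hcongr : ∀ j, (1 - s' j) * F' j u =
        (1 - s' j) * c u (g u) + s' j * ((1 - s' j) * F' j (g u)) := by
      intro j
      rw [hrec j u]
      ring
    have := tendsto_nhds_unique (hν u) (hrhs.congr (fun j => (hcongr j).symm))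
    rw [this]
    ring
  -- the normalized quantities
  have hDrw : ∀ j u, F' j u - ν u / (1 - s' j) =
      c u (g u) + s' j * (F' j (g u) - ν (g u) / (1 - s' j)) - ν u := by
    intro j u
    rw [hrec j u, hνg u]
    field_simp [h1ms j]
    ring
  -- (b) the d-equation along g
  have hdg : ∀ u, ν u + d u = c u (g u) + d (g u) := by
    intro u
    have hrhs : Filter.Tendsto (fun j => c u (g u) +
        s' j * (F' j (g u) - ν (g u) / (1 - s' j)) - ν u) Filter.atTop
        (𝓝 (c u (g u) + 1 * d (g u) - ν u)) :=
      (tendsto_const_nhds.add (hs'lim.mul (hd (g u)))).sub tendsto_const_nhds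
    have := tendsto_nhds_unique (hd u) (hrhs.congr (fun j => (hDrw j u).symm))
    rw [this]
    ring
  refine ⟨ν, d, g, hgE, hνg, hdg, ?_, ?_⟩
  · -- Min vertices
    intro u hu w hw
    have hineq : ∀ j, F' j u ≤ c u w + s' j * F' j w := fun j => hineqMin (φ j) u hu w hw
    have hνle : ν u ≤ ν w := by
      have hl : ∀ j, (1 - s' j) * F' j u ≤
          (1 - s' j) * c u w + s' j * ((1 - s' j) * F' j w) := by
        intro j
        have h0 : 0 ≤ 1 - s' j := by linarith [hs'1 j]
        nlinarith [hineq j]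
      have hrhs : Filter.Tendsto (fun j => (1 - s' j) * c u w +
          s' j * ((1 - s' j) * F' j w)) Filter.atTop (𝓝 (0 * c u w + 1 * ν w)) :=
        (hsub.mul tendsto_const_nhds).add (hs'lim.mul (hν w))
      have := le_of_tendsto_of_tendsto' (hν u) hrhs hl
      linarith
    refine ⟨hνle, ?_⟩
    intro hνw
    have hl : ∀ j, F' j u - ν u / (1 - s' j) ≤
        c u w + s' j * (F' j w - ν w / (1 - s' j)) - ν u := by
      intro j
      have haux : s' j * (ν u / (1 - s' j)) = ν u / (1 - s' j) - ν u := by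
        field_simp [h1ms j]
        ring
      rw [hνw]
      have hdist : s' j * (F' j w - ν u / (1 - s' j)) =
          s' j * F' j w - s' j * (ν u / (1 - s' j)) := by ring
      rw [hdist, haux]
      have hfin : c u w + (s' j * F' j w - (ν u / (1 - s' j) - ν u)) - ν u
          = (c u w + s' j * F' j w) - ν u / (1 - s' j) := by ring
      rw [hfin]
      exact sub_le_sub_right (hineq j) _
    have hrhs : Filter.Tendsto (fun j => c u w +
        s' j * (F' j w - ν w / (1 - s' j)) - ν u) Filter.atTop
        (𝓝 (c u w + 1 * d w - ν u)) :=
      (tendsto_const_nhds.add (hs'lim.mul (hd w))).sub tendsto_const_nhds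
    have := le_of_tendsto_of_tendsto' (hd u) hrhs hl
    linarith
  · -- Max vertices
    intro u hu w hw
    have hineq : ∀ j, c u w + s' j * F' j w ≤ F' j u := fun j => hineqMax (φ j) u hu w hw
    have hνle : ν w ≤ ν u := by
      have hl : ∀ j, (1 - s' j) * c u w + s' j * ((1 - s' j) * F' j w) ≤
          (1 - s' j) * F' j u := by
        intro j
        have h0 : 0 ≤ 1 - s' j := by linarith [hs'1 j]
        nlinarith [hineq j]
      have hlhs : Filter.Tendsto (fun j => (1 - s' j) * c u w +
          s' j * ((1 - s' j) * F' j w)) Filter.atTop (𝓝 (0 * c u w + 1 * ν w)) :=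
        (hsub.mul tendsto_const_nhds).add (hs'lim.mul (hν w))
      have := le_of_tendsto_of_tendsto' hlhs (hν u) hl
      linarith
    refine ⟨hνle, ?_⟩
    intro hνw
    have hl : ∀ j, c u w + s' j * (F' j w - ν w / (1 - s' j)) - ν u ≤
        F' j u - ν u / (1 - s' j) := by
      intro j
      have haux : s' j * (ν u / (1 - s' j)) = ν u / (1 - s' j) - ν u := by
        field_simp [h1ms j]
        ring
      rw [hνw]
      have hdist : s' j * (F' j w - ν u / (1 - s' j)) =
          s' j * F' j w - s' j * (ν u / (1 - s' j)) := by ring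
      rw [hdist, haux]
      have hfin : c u w + (s' j * F' j w - (ν u / (1 - s' j) - ν u)) - ν u
          = (c u w + s' j * F' j w) - ν u / (1 - s' j) := by ring
      rw [hfin]
      exact sub_le_sub_right (hineq j) _
    have hlhs : Filter.Tendsto (fun j => c u w +
        s' j * (F' j w - ν w / (1 - s' j)) - ν u) Filter.atTop
        (𝓝 (c u w + 1 * d w - ν u)) :=
      (tendsto_const_nhds.add (hs'lim.mul (hd w))).sub tendsto_const_nhds
    have := le_of_tendsto_of_tendsto' hlhs (hd u) hl
    linarith

end MPGAux

section GameGlue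

variable {V : Type} (E : V → V → Prop) (price : V → V → ℤ) (VMin : Set V)

local notation "G" => priceArena V E price VMin

lemma pa_extend_last (r : (G).FinRun) (mv : V) (q' : V) (h : (G).Tr r.last mv q') :
    (r.extend mv q' h).last = q' := by
  simp [Arena.FinRun.extend, Arena.FinRun.last, Fin.snoc_last]

lemma pa_extend_time (r : (G).FinRun) (mv : V) (q' : V) (h : (G).Tr r.last mv q') :
    (r.extend mv q' h).time = r.time + (G).cost r.last mv := by
  show ∑ i : Fin (r.n + 1), (G).cost ((Fin.snoc r.q q' : Fin (r.n + 1 + 1) → V) i.castSucc)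
    ((Fin.snoc r.m mv : Fin (r.n + 1) → V) i) = _
  rw [Fin.sum_univ_castSucc]
  simp [Arena.FinRun.extend, Arena.FinRun.time, Fin.sum_univ_castSucc, Fin.snoc_castSucc,
    Fin.snoc_last, Arena.FinRun.last]

lemma pa_play_zero_last (μ : (G).MinStrategy) (χ : (G).MaxStrategy) (v : V) :
    ((G).play μ χ v 0).last = v := rfl

/-- The step structure of the play. -/
lemma pa_play_step (μ : (G).MinStrategy) (χ : (G).MaxStrategy) (v : V) (n : ℕ) :
    E (((G).play μ χ v n).last) (((G).play μ χ v (n + 1)).last) ∧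
    (((G).play μ χ v n).last ∈ VMin →
      ((G).play μ χ v (n + 1)).last = μ.1 ((G).play μ χ v n)) ∧
    (((G).play μ χ v n).last ∉ VMin →
      ((G).play μ χ v (n + 1)).last = χ.1 ((G).play μ χ v n)) ∧
    ((G).play μ χ v (n + 1)).time = ((G).play μ χ v n).time +
      (price (((G).play μ χ v n).last) (((G).play μ χ v (n + 1)).last) : ℝ) := by
  set r := (G).play μ χ v n with hr
  by_cases h : r.last ∈ VMin
  · have hmem : (G).IsMin r.last := h
    have hplay : (G).play μ χ v (n + 1) =
        r.extend (μ.1 r) (Classical.choose (μ.2 r hmem)) (Classical.choose_spec (μ.2 r hmem)) := by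
      rw [Arena.play]
      simp only [← hr]
      rw [dif_pos hmem]
    obtain ⟨hEdge, hEq⟩ := Classical.choose_spec (μ.2 r hmem)
    rw [hplay, pa_extend_last, pa_extend_time, hEq]
    exact ⟨hEdge, fun _ => rfl, fun hc => absurd h hc, rfl⟩
  · have hmem : ¬ (G).IsMin r.last := h
    have hplay : (G).play μ χ v (n + 1) =
        r.extend (χ.1 r) (Classical.choose (χ.2 r hmem)) (Classical.choose_spec (χ.2 r hmem)) := by
      rw [Arena.play]
      simp only [← hr]
      rw [dif_neg hmem]
    obtain ⟨hEdge, hEq⟩ := Classical.choose_spec (χ.2 r hmem)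
    rw [hplay, pa_extend_last, pa_extend_time, hEq]
    exact ⟨hEdge, fun hc => absurd hc h, fun _ => rfl, rfl⟩

lemma pa_play_time (μ : (G).MinStrategy) (χ : (G).MaxStrategy) (v : V) (n : ℕ) :
    ((G).play μ χ v n).time =
      ∑ i ∈ Finset.range n,
        (price (((G).play μ χ v i).last) (((G).play μ χ v (i + 1)).last) : ℝ) := by
  induction n with
  | zero =>
    simp [Arena.play, priceArena, Arena.single, Arena.FinRun.time]
    exact Finset.sum_eq_zero (fun i _ => i.elim0)
  | succ n ih =>
      rw [Finset.sum_range_succ, ← ih]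
      exact (pa_play_step E price VMin μ χ v n).2.2.2

lemma pa_AMin_le [Fintype V] (ν d : V → ℝ) (g : V → V)
    (hg : ∀ u, E u (g u)) (hνg : ∀ u, ν (g u) = ν u)
    (hdg : ∀ u, ν u + d u = (price u (g u) : ℝ) + d (g u))
    (hMax : ∀ u, u ∉ VMin → ∀ w, E u w →
      ν w ≤ ν u ∧ (ν w = ν u → (price u w : ℝ) + d w ≤ ν u + d u))
    (M : ℝ) (hM : ∀ u w, |(price u w : ℝ)| ≤ M)
    (μ : (G).MinStrategy) (hμ : ∀ r, μ.1 r = g r.last)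
    (χ : (G).MaxStrategy) (v : V) :
    (G).AMin v μ χ ≤ ν v := by
  set Q : ℕ → V := fun n => ((G).play μ χ v n).last with hQ
  set cst : ℕ → ℝ := fun n => (price (Q n) (Q (n + 1)) : ℝ) with hcst
  have hQ0 : Q 0 = v := rfl
  have key : ∀ n, E (Q n) (Q (n + 1)) ∧ (Q n ∈ VMin → Q (n + 1) = g (Q n)) := by
    intro n
    obtain ⟨h1, h2, _, _⟩ := pa_play_step E price VMin μ χ v n
    refine ⟨h1, fun h => ?_⟩
    have h3 := h2 h
    rw [hμ] at h3
    exact h3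
  have hAMin : (G).AMin v μ χ =
      Filter.limsup (fun n : ℕ => (∑ i ∈ Finset.range n, cst i) / n) Filter.atTop := by
    unfold Arena.AMin
    congr 1
    funext n
    rw [pa_play_time]
  rw [hAMin, ← hQ0]
  refine limsup_avg_le_of_potential ν d Q cst M (fun n => hM _ _) ?_ ?_
  · intro n
    obtain ⟨h1, h2⟩ := key n
    by_cases h : Q n ∈ VMin
    · rw [h2 h, hνg]
    · exact (hMax (Q n) h (Q (n + 1)) h1).1
  · intro n hne
    obtain ⟨h1, h2⟩ := key n
    show (price (Q n) (Q (n + 1)) : ℝ) ≤ ν (Q n) + d (Q n) - d (Q (n + 1))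
    by_cases h : Q n ∈ VMin
    · rw [h2 h]
      linarith [hdg (Q n)]
    · linarith [(hMax (Q n) h (Q (n + 1)) h1).2 hne]

lemma pa_le_AMax [Fintype V] (ν d : V → ℝ) (g : V → V)
    (hg : ∀ u, E u (g u)) (hνg : ∀ u, ν (g u) = ν u)
    (hdg : ∀ u, ν u + d u = (price u (g u) : ℝ) + d (g u))
    (hMin : ∀ u ∈ VMin, ∀ w, E u w →
      ν u ≤ ν w ∧ (ν w = ν u → ν u + d u ≤ (price u w : ℝ) + d w))
    (M : ℝ) (hM : ∀ u w, |(price u w : ℝ)| ≤ M)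
    (χ : (G).MaxStrategy) (hχ : ∀ r, χ.1 r = g r.last)
    (μ : (G).MinStrategy) (v : V) :
    ν v ≤ (G).AMax v μ χ := by
  set Q : ℕ → V := fun n => ((G).play μ χ v n).last with hQ
  set cst : ℕ → ℝ := fun n => (price (Q n) (Q (n + 1)) : ℝ) with hcst
  have hQ0 : Q 0 = v := rfl
  have key : ∀ n, E (Q n) (Q (n + 1)) ∧ (Q n ∉ VMin → Q (n + 1) = g (Q n)) := by
    intro n
    obtain ⟨h1, _, h3, _⟩ := pa_play_step E price VMin μ χ v n
    refine ⟨h1, fun h => ?_⟩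
    have h4 := h3 h
    rw [hχ] at h4
    exact h4
  have hAMax : (G).AMax v μ χ =
      Filter.liminf (fun n : ℕ => (∑ i ∈ Finset.range n, cst i) / n) Filter.atTop := by
    unfold Arena.AMax
    congr 1
    funext n
    rw [pa_play_time]
  rw [hAMax, ← hQ0]
  refine le_liminf_avg_of_potential ν d Q cst M (fun n => hM _ _) ?_ ?_
  · intro n
    obtain ⟨h1, h2⟩ := key n
    by_cases h : Q n ∈ VMin
    · exact (hMin (Q n) h (Q (n + 1)) h1).1
    · rw [h2 h, hνg]
  · intro n hne
    obtain ⟨h1, h2⟩ := key n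
    show ν (Q n) + d (Q n) - d (Q (n + 1)) ≤ (price (Q n) (Q (n + 1)) : ℝ)
    by_cases h : Q n ∈ VMin
    · linarith [(hMin (Q n) h (Q (n + 1)) h1).2 hne]
    · rw [h2 h]
      linarith [hdg (Q n)]

end GameGlue

section Bounds

open Filter in
lemma bounds_helper (f : ℕ → ℝ) (M : ℝ) (h : ∀ n, |f n| ≤ M) :
    -M ≤ Filter.liminf f Filter.atTop ∧
    Filter.liminf f Filter.atTop ≤ Filter.limsup f Filter.atTop ∧
    Filter.limsup f Filter.atTop ≤ M := by
  have hub : ∀ n, f n ≤ M := fun n => (abs_le.1 (h n)).2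
  have hlb : ∀ n, -M ≤ f n := fun n => (abs_le.1 (h n)).1
  have hbdd : IsBoundedUnder (· ≤ ·) atTop f := Filter.isBoundedUnder_of ⟨M, hub⟩
  have hbdd' : IsBoundedUnder (· ≥ ·) atTop f := Filter.isBoundedUnder_of ⟨-M, hlb⟩
  refine ⟨?_, ?_, ?_⟩
  · exact Filter.le_liminf_of_le hbdd.isCoboundedUnder_ge (Filter.Eventually.of_forall hlb)
  · exact Filter.liminf_le_limsup hbdd hbdd'
  · exact Filter.limsup_le_of_le hbdd'.isCoboundedUnder_le (Filter.Eventually.of_forall hub)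

end Bounds


/-- Every average-price game on a finite graph is determined and both players
have optimal positional strategies. -/
theorem averagePriceGame_positionally_determined
    (V : Type) [Fintype V] (E : V → V → Prop) (hE : ∀ v : V, ∃ w : V, E v w)
    (price : V → V → ℤ) (VMin : Set V) (v : V) :
    (⨅ μ : {μ : (priceArena V E price VMin).MinStrategy // Arena.Positional μ.1},
        ⨆ χ : (priceArena V E price VMin).MaxStrategy,
          (priceArena V E price VMin).AMin v μ.1 χ) =
      (⨆ χ : {χ : (priceArena V E price VMin).MaxStrategy // Arena.Positional χ.1},
        ⨅ μ : (priceArena V E price VMin).MinStrategy,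
          (priceArena V E price VMin).AMax v μ χ.1) ∧
    (⨅ μ : {μ : (priceArena V E price VMin).MinStrategy // Arena.Positional μ.1},
        ⨆ χ : (priceArena V E price VMin).MaxStrategy,
          (priceArena V E price VMin).AMin v μ.1 χ) =
      (priceArena V E price VMin).upperVal v ∧
    (⨆ χ : {χ : (priceArena V E price VMin).MaxStrategy // Arena.Positional χ.1},
        ⨅ μ : (priceArena V E price VMin).MinStrategy,
          (priceArena V E price VMin).AMax v μ χ.1) =
      (priceArena V E price VMin).lowerVal v := by
  classical
  have hNE : Nonempty V := ⟨v⟩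
  set A := priceArena V E price VMin with hA
  obtain ⟨ν, d, g, hg, hνg, hdg, hMin, hMax⟩ :=
    exists_potentials E hE (fun u w => (price u w : ℝ)) VMin
  obtain ⟨M, hM⟩ : ∃ M : ℝ, ∀ u w : V, |(price u w : ℝ)| ≤ M := by
    obtain ⟨M, hM⟩ := Finite.exists_le (fun p : V × V => |(price p.1 p.2 : ℝ)|)
    exact ⟨M, fun u w => hM (u, w)⟩
  have hM0 : 0 ≤ M := le_trans (abs_nonneg _) (hM v v)
  let μs : A.MinStrategy := ⟨fun r => g r.last, fun r _ => ⟨g r.last, hg _, rfl⟩⟩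
  let χs : A.MaxStrategy := ⟨fun r => g r.last, fun r _ => ⟨g r.last, hg _, rfl⟩⟩
  have hμpos : Arena.Positional μs.1 := fun r r' h => by show g r.last = g r'.last; rw [h]
  have hχpos : Arena.Positional χs.1 := fun r r' h => by show g r.last = g r'.last; rw [h]
  have hNEμ : Nonempty A.MinStrategy := ⟨μs⟩
  have hNEχ : Nonempty A.MaxStrategy := ⟨χs⟩
  -- boundedness of the average sequences
  have hseq : ∀ (μ : A.MinStrategy) (χ : A.MaxStrategy) (n : ℕ),
      |(A.play μ χ v n).time / n| ≤ M := by
    intro μ χ n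
    rcases Nat.eq_zero_or_pos n with hn | hn
    · subst hn; simpa using hM0
    · rw [pa_play_time E price VMin, abs_div]
      rw [Nat.abs_cast]
      rw [div_le_iff₀ (by exact_mod_cast hn)]
      calc |∑ i ∈ Finset.range n, (price ((A.play μ χ v i).last)
              ((A.play μ χ v (i + 1)).last) : ℝ)|
          ≤ ∑ i ∈ Finset.range n, |(price ((A.play μ χ v i).last)
              ((A.play μ χ v (i + 1)).last) : ℝ)| := Finset.abs_sum_le_sum_abs _ _
        _ ≤ ∑ _i ∈ Finset.range n, M := Finset.sum_le_sum (fun i _ => hM _ _)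
        _ = n * M := by rw [Finset.sum_const, Finset.card_range, nsmul_eq_mul]
        _ = M * n := by ring
  have hbounds : ∀ (μ : A.MinStrategy) (χ : A.MaxStrategy),
      -M ≤ A.AMax v μ χ ∧ A.AMax v μ χ ≤ A.AMin v μ χ ∧ A.AMin v μ χ ≤ M := by
    intro μ χ
    exact bounds_helper (fun n => (A.play μ χ v n).time / n) M (hseq μ χ)
  -- key optimality claims for the positional strategies
  have claim1 : ∀ χ : A.MaxStrategy, A.AMin v μs χ ≤ ν v := fun χ =>
    pa_AMin_le E price VMin ν d g hg hνg hdg hMax M hM μs (fun _ => rfl) χ v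
  have claim2 : ∀ μ : A.MinStrategy, ν v ≤ A.AMax v μ χs := fun μ =>
    pa_le_AMax E price VMin ν d g hg hνg hdg hMin M hM χs (fun _ => rfl) μ v
  -- boundedness of the inner sup/inf families
  have bddA : ∀ μ : A.MinStrategy, BddAbove (Set.range fun χ => A.AMin v μ χ) := by
    intro μ
    exact ⟨M, by rintro _ ⟨χ, rfl⟩; exact (hbounds μ χ).2.2⟩
  have bddI : ∀ χ : A.MaxStrategy, BddBelow (Set.range fun μ => A.AMax v μ χ) := by
    intro χ
    exact ⟨-M, by rintro _ ⟨μ, rfl⟩; exact (hbounds μ χ).1⟩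
  have hSub : ∀ μ : A.MinStrategy, (⨆ χ, A.AMin v μ χ) ≤ M :=
    fun μ => ciSup_le (fun χ => (hbounds μ χ).2.2)
  have hSlb : ∀ μ : A.MinStrategy, -M ≤ ⨆ χ, A.AMin v μ χ :=
    fun μ => le_trans (le_trans (hbounds μ χs).1 (hbounds μ χs).2.1) (le_ciSup (bddA μ) χs)
  have hIub : ∀ χ : A.MaxStrategy, (⨅ μ, A.AMax v μ χ) ≤ M :=
    fun χ => le_trans (ciInf_le (bddI χ) μs)
      (le_trans (hbounds μs χ).2.1 (hbounds μs χ).2.2)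
  have hIlb : ∀ χ : A.MaxStrategy, -M ≤ ⨅ μ, A.AMax v μ χ :=
    fun χ => le_ciInf (fun μ => (hbounds μ χ).1)
  have bddS_all : BddBelow (Set.range fun μ : A.MinStrategy => ⨆ χ, A.AMin v μ χ) :=
    ⟨-M, by rintro _ ⟨μ, rfl⟩; exact hSlb μ⟩
  have bddS_pos : BddBelow (Set.range fun μ : {μ : A.MinStrategy // Arena.Positional μ.1} =>
      ⨆ χ, A.AMin v μ.1 χ) := ⟨-M, by rintro _ ⟨μ, rfl⟩; exact hSlb μ.1⟩
  have bddI_all : BddAbove (Set.range fun χ : A.MaxStrategy => ⨅ μ, A.AMax v μ χ) :=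
    ⟨M, by rintro _ ⟨χ, rfl⟩; exact hIub χ⟩
  have bddI_pos : BddAbove (Set.range fun χ : {χ : A.MaxStrategy // Arena.Positional χ.1} =>
      ⨅ μ, A.AMax v μ χ.1) := ⟨M, by rintro _ ⟨χ, rfl⟩; exact hIub χ.1⟩
  have hNEμp : Nonempty {μ : A.MinStrategy // Arena.Positional μ.1} := ⟨⟨μs, hμpos⟩⟩
  have hNEχp : Nonempty {χ : A.MaxStrategy // Arena.Positional χ.1} := ⟨⟨χs, hχpos⟩⟩
  -- the main chain of inequalities
  have h1 : A.upperVal v ≤ ⨅ μ : {μ : A.MinStrategy // Arena.Positional μ.1},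
      ⨆ χ, A.AMin v μ.1 χ := le_ciInf (fun μ => ciInf_le bddS_all μ.1)
  have h2 : (⨆ χ : {χ : A.MaxStrategy // Arena.Positional χ.1}, ⨅ μ, A.AMax v μ χ.1)
      ≤ A.lowerVal v := ciSup_le (fun χ => le_ciSup bddI_all χ.1)
  have h3 : A.lowerVal v ≤ A.upperVal v := by
    refine ciSup_le (fun χ => le_ciInf (fun μ => ?_))
    exact le_trans (ciInf_le (bddI χ) μ)
      (le_trans (hbounds μ χ).2.1 (le_ciSup (bddA μ) χ))
  have h4 : (⨅ μ : {μ : A.MinStrategy // Arena.Positional μ.1}, ⨆ χ, A.AMin v μ.1 χ)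
      ≤ ν v := le_trans (ciInf_le bddS_pos ⟨μs, hμpos⟩) (ciSup_le claim1)
  have h5 : ν v ≤ ⨆ χ : {χ : A.MaxStrategy // Arena.Positional χ.1},
      ⨅ μ, A.AMax v μ χ.1 := le_trans (le_ciInf claim2) (le_ciSup bddI_pos ⟨χs, hχpos⟩)
  have e1 : (⨅ μ : {μ : A.MinStrategy // Arena.Positional μ.1}, ⨆ χ, A.AMin v μ.1 χ)
      ≤ ⨆ χ : {χ : A.MaxStrategy // Arena.Positional χ.1}, ⨅ μ, A.AMax v μ χ.1 :=
    le_trans h4 h5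
  have e2 : (⨆ χ : {χ : A.MaxStrategy // Arena.Positional χ.1}, ⨅ μ, A.AMax v μ χ.1)
      ≤ ⨅ μ : {μ : A.MinStrategy // Arena.Positional μ.1}, ⨆ χ, A.AMin v μ.1 χ :=
    le_trans h2 (le_trans h3 h1)
  refine ⟨le_antisymm e1 e2, le_antisymm ?_ h1, le_antisymm h2 ?_⟩
  · exact le_trans e1 (le_trans h2 h3)
  · exact le_trans h3 (le_trans h1 e1)
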